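/- Let n ≥ 1 be an integer and let G and Ĝ be CDFs on [0,1] such that Ĝ is a mean-preserving spread of G. Then the expected maximum of n i.i.d. draws is weakly larger under Ĝ than under G, i.e. ∫₀¹ Ĝ(x)ⁿ dx ≤ ∫₀¹ G(x)ⁿ dx. Moreover, if n ≥ 2 and additionally ∫₀ˣ (Ĝ(t) − G(t)) dt > 0 for all x in some set of positive measure under the probability measure induced by G, then the inequality is strict. -/

import Mathlib

open MeasureTheory Set

/-- Auxiliary Stieltjes function: the sum `∑_{k<n} Ĝ^k G^{n-1-k}` truncated so as to be
monotone and right continuous everywhere. -/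
noncomputable def mpsAuxH (n : ℕ) (G Ghat : StieltjesFunction ℝ) : StieltjesFunction ℝ where
  toFun x := ∑ k ∈ Finset.range n, max (Ghat x) 0 ^ k * max (G x) 0 ^ (n - 1 - k)
  mono' := by
    intro x y hxy
    apply Finset.sum_le_sum
    intro k _
    have h1 : max (Ghat x) 0 ≤ max (Ghat y) 0 := max_le_max (Ghat.mono hxy) le_rfl
    have h2 : max (G x) 0 ≤ max (G y) 0 := max_le_max (G.mono hxy) le_rfl
    exact mul_le_mul (pow_le_pow_left₀ (le_max_right _ _) h1 k)
      (pow_le_pow_left₀ (le_max_right _ _) h2 _) (by positivity) (by positivity)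
  right_continuous' := by
    intro x
    apply tendsto_finset_sum
    intro k _
    exact (((Ghat.right_continuous x).max continuousWithinAt_const).pow k).mul
      (((G.right_continuous x).max continuousWithinAt_const).pow _)

lemma mpsAuxH_apply (n : ℕ) (G Ghat : StieltjesFunction ℝ) (x : ℝ) :
    mpsAuxH n G Ghat x = ∑ k ∈ Finset.range n, max (Ghat x) 0 ^ k * max (G x) 0 ^ (n - 1 - k) :=
  rfl

theorem stmt0 (n : ℕ) (hn : 1 ≤ n) (G Ghat : StieltjesFunction ℝ)
    (hG01 : ∀ x ∈ Set.Icc (0:ℝ) 1, G x ∈ Set.Icc (0:ℝ) 1)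
    (hGhat01 : ∀ x ∈ Set.Icc (0:ℝ) 1, Ghat x ∈ Set.Icc (0:ℝ) 1)
    (hG1 : G 1 = 1) (hGhat1 : Ghat 1 = 1)
    (hMPS : ∀ x ∈ Set.Icc (0:ℝ) 1, 0 ≤ ∫ t in (0:ℝ)..x, (Ghat t - G t))
    (hMean : (∫ t in (0:ℝ)..1, (Ghat t - G t)) = 0) :
    (∫ x in (0:ℝ)..1, (Ghat x) ^ n) ≤ (∫ x in (0:ℝ)..1, (G x) ^ n) ∧
    (2 ≤ n →
      0 < G.measure {x : ℝ | x ∈ Set.Icc (0:ℝ) 1 ∧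
          0 < ∫ t in (0:ℝ)..x, (Ghat t - G t)} →
      (∫ x in (0:ℝ)..1, (Ghat x) ^ n) < (∫ x in (0:ℝ)..1, (G x) ^ n)) := by
  set d : ℝ → ℝ := fun t => Ghat t - G t with hd_def
  set D : ℝ → ℝ := fun x => ∫ t in (0:ℝ)..x, d t with hD_def
  set h := mpsAuxH n G Ghat with hh_def
  set μh := h.measure with hμ_def
  set I : Set ℝ := Ioc 0 1 with hI_def
  have hIm : MeasurableSet I := measurableSet_Ioc
  have hIsub : I ⊆ Icc (0:ℝ) 1 := Ioc_subset_Icc_self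
  -- measurability
  have hGm : Measurable (G : ℝ → ℝ) := G.mono.measurable
  have hGhm : Measurable (Ghat : ℝ → ℝ) := Ghat.mono.measurable
  have hdm : Measurable d := hGhm.sub hGm
  have hhm : Measurable (h : ℝ → ℝ) := h.mono.measurable
  -- interval integrability of d
  have hdii : ∀ a b : ℝ, IntervalIntegrable d volume a b := fun a b =>
    (Ghat.mono.intervalIntegrable).sub (G.mono.intervalIntegrable)
  have hDcont : Continuous D := intervalIntegral.continuous_primitive hdii 0
  have hD0 : D 0 = 0 := intervalIntegral.integral_same
  have hD1 : D 1 = 0 := hMean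
  -- bounds
  have hdb : ∀ x ∈ Icc (0:ℝ) 1, |d x| ≤ 1 := by
    intro x hx
    have h1 := hG01 x hx
    have h2 := hGhat01 x hx
    simp only [mem_Icc] at h1 h2
    rw [abs_le]
    constructor <;> simp only [hd_def] <;> linarith
  have hh_nonneg : ∀ x, 0 ≤ h x := by
    intro x
    rw [hh_def, mpsAuxH_apply]
    apply Finset.sum_nonneg
    intro k _
    positivity
  -- value of h on [0,1]
  have hhval : ∀ x ∈ Icc (0:ℝ) 1,
      h x = ∑ k ∈ Finset.range n, Ghat x ^ k * G x ^ (n - 1 - k) := by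
    intro x hx
    have h1 := (hG01 x hx).1
    have h2 := (hGhat01 x hx).1
    rw [hh_def, mpsAuxH_apply]
    simp only [max_eq_left h1, max_eq_left h2]
  -- the algebraic identity on [0,1]
  have hid : ∀ x ∈ Icc (0:ℝ) 1, Ghat x ^ n - G x ^ n = d x * h x := by
    intro x hx
    rw [hhval x hx, hd_def, mul_comm]
    exact (geom_sum₂_mul (Ghat x) (G x) n).symm
  -- h x = h 0 + (μh (Ioc 0 x)).toReal on I
  have hμIoc : ∀ x : ℝ, μh (Ioc 0 x) = ENNReal.ofReal (h x - h 0) := fun x => h.measure_Ioc 0 x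
  have hhrep : ∀ x ∈ I, h x = h 0 + (μh (Ioc 0 x)).toReal := by
    intro x hx
    rw [hμIoc x, ENNReal.toReal_ofReal (by linarith [h.mono (le_of_lt hx.1)])]
    ring
  -- finiteness facts
  have hμI_ne : μh I ≠ ⊤ := by rw [hI_def, hμIoc 1]; exact ENNReal.ofReal_ne_top
  haveI : IsFiniteMeasure (μh.restrict I) :=
    ⟨by rwa [Measure.restrict_apply_univ, lt_top_iff_ne_top]⟩
  haveI : IsFiniteMeasure (volume.restrict I) :=
    ⟨by rw [Measure.restrict_apply_univ]; simp [hI_def]⟩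
  -- integrabilities
  have hdInt : IntegrableOn d I volume := (hdii 0 1).1
  have hDIntμ : IntegrableOn D I μh :=
    (hDcont.continuousOn.integrableOn_compact isCompact_Icc).mono_set hIsub
  have hmtoReal : Measurable fun x : ℝ => (μh (Ioc 0 x)).toReal := by
    have : (fun x : ℝ => (μh (Ioc 0 x)).toReal) = fun x => max (h x - h 0) 0 := by
      funext x
      rw [hμIoc x, ENNReal.toReal_ofReal']
    rw [this]
    exact (hhm.sub measurable_const).max measurable_const
  have hdmInt : IntegrableOn (fun x => d x * (μh (Ioc 0 x)).toReal) I volume := by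
    apply Integrable.mono' (integrable_const (h 1 - h 0))
      ((hdm.mul hmtoReal).aestronglyMeasurable)
    filter_upwards [ae_restrict_mem hIm] with x hx
    have h1 := hdb x (hIsub hx)
    have h2 : (μh (Ioc 0 x)).toReal ≤ h 1 - h 0 := by
      rw [hμIoc x, ENNReal.toReal_ofReal']
      have := h.mono hx.2
      have := h.mono (hIsub hx).1
      rcases max_cases (h x - h 0) 0 with ⟨he, _⟩ | ⟨he, _⟩ <;> rw [he] <;> linarith
    have h3 : 0 ≤ (μh (Ioc 0 x)).toReal := ENNReal.toReal_nonneg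
    calc ‖d x * (μh (Ioc 0 x)).toReal‖ = |d x| * (μh (Ioc 0 x)).toReal := by
          rw [norm_mul, Real.norm_eq_abs, Real.norm_eq_abs, abs_of_nonneg h3]
      _ ≤ 1 * (h 1 - h 0) := mul_le_mul h1 h2 h3 zero_le_one
      _ = h 1 - h 0 := one_mul _
  have hdhInt : IntegrableOn (fun x => d x * h x) I volume := by
    apply Integrable.mono' (integrable_const (h 1)) ((hdm.mul hhm).aestronglyMeasurable)
    filter_upwards [ae_restrict_mem hIm] with x hx
    have h1 := hdb x (hIsub hx)
    have h2 : h x ≤ h 1 := h.mono hx.2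
    have h3 := hh_nonneg x
    calc ‖d x * h x‖ = |d x| * h x := by
          rw [norm_mul, Real.norm_eq_abs, Real.norm_eq_abs, abs_of_nonneg h3]
      _ ≤ 1 * h 1 := mul_le_mul h1 h2 h3 zero_le_one
      _ = h 1 := one_mul _
  have hGnInt : IntegrableOn (fun x => G x ^ n) I volume := by
    apply Integrable.mono' (integrable_const 1) ((hGm.pow_const n).aestronglyMeasurable)
    filter_upwards [ae_restrict_mem hIm] with x hx
    have h1 := hG01 x (hIsub hx)
    rw [norm_pow, Real.norm_eq_abs]
    exact pow_le_one₀ (abs_nonneg _) (abs_le.mpr ⟨by linarith [h1.1], h1.2⟩)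
  have hGhnInt : IntegrableOn (fun x => Ghat x ^ n) I volume := by
    apply Integrable.mono' (integrable_const 1) ((hGhm.pow_const n).aestronglyMeasurable)
    filter_upwards [ae_restrict_mem hIm] with x hx
    have h1 := hGhat01 x (hIsub hx)
    rw [norm_pow, Real.norm_eq_abs]
    exact pow_le_one₀ (abs_nonneg _) (abs_le.mpr ⟨by linarith [h1.1], h1.2⟩)
  -- step 1: rewrite integrand
  have e1 : ∫ x in I, (Ghat x ^ n - G x ^ n) = ∫ x in I, d x * h x :=
    setIntegral_congr_fun hIm fun x hx => hid x (hIsub hx)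
  -- step 2: split using the representation of h
  have hintd0 : ∫ x in I, d x = 0 := by
    rw [hI_def, ← intervalIntegral.integral_of_le zero_le_one]
    exact hMean
  have e2 : ∫ x in I, d x * h x = ∫ x in I, d x * (μh (Ioc 0 x)).toReal := by
    have : ∫ x in I, d x * h x
        = ∫ x in I, (h 0 * d x + d x * (μh (Ioc 0 x)).toReal) := by
      apply setIntegral_congr_fun hIm
      intro x hx
      show d x * h x = h 0 * d x + d x * (μh (Ioc 0 x)).toReal
      rw [hhrep x hx]
      ring
    rw [this, integral_add (hdInt.const_mul _) hdmInt, integral_const_mul, hintd0, mul_zero,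
      zero_add]
  -- step 3: Fubini
  have e3 : ∫ x in I, d x * (μh (Ioc 0 x)).toReal = ∫ t in I, (-(D t)) ∂μh := by
    have hpre : ∀ x ∈ I, d x * (μh (Ioc 0 x)).toReal
        = ∫ t in I, d x * (Ioc 0 x).indicator 1 t ∂μh := by
      intro x hx
      rw [integral_const_mul]
      congr 1
      rw [show (∫ t in I, (Ioc 0 x).indicator 1 t ∂μh)
          = ((μh.restrict I) (Ioc 0 x)).toReal from integral_indicator_one measurableSet_Ioc,
        Measure.restrict_apply measurableSet_Ioc,
        inter_eq_left.mpr (Ioc_subset_Ioc le_rfl hx.2)]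
    rw [setIntegral_congr_fun hIm hpre]
    have hA : MeasurableSet {p : ℝ × ℝ | 0 < p.2 ∧ p.2 ≤ p.1} :=
      (measurableSet_lt measurable_const measurable_snd).inter
        (measurableSet_le measurable_snd measurable_fst)
    have hfeq : (Function.uncurry fun x t => d x * (Ioc 0 x).indicator 1 t)
        = Set.indicator {p : ℝ × ℝ | 0 < p.2 ∧ p.2 ≤ p.1} (fun p => d p.1) := by
      funext p
      by_cases hp : p ∈ {p : ℝ × ℝ | 0 < p.2 ∧ p.2 ≤ p.1}
      · have hmem : p.2 ∈ Ioc 0 p.1 := ⟨hp.1, hp.2⟩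
        simp [Function.uncurry, indicator_of_mem hp, indicator_of_mem hmem]
      · have hmem : p.2 ∉ Ioc 0 p.1 := fun hc => hp ⟨hc.1, hc.2⟩
        simp [Function.uncurry, indicator_of_notMem hp, indicator_of_notMem hmem]
    have hint : Integrable (Function.uncurry fun x t => d x * (Ioc 0 x).indicator 1 t)
        ((volume.restrict I).prod (μh.restrict I)) := by
      rw [hfeq]
      apply Integrable.mono' (integrable_const 1)
        (((hdm.comp measurable_fst).indicator hA).aestronglyMeasurable)
      rw [Measure.prod_restrict]
      filter_upwards [ae_restrict_mem (hIm.prod hIm)] with p hp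
      calc ‖Set.indicator {p : ℝ × ℝ | 0 < p.2 ∧ p.2 ≤ p.1} (fun p => d p.1) p‖
          ≤ ‖d p.1‖ := norm_indicator_le_norm_self _ _
        _ ≤ 1 := by rw [Real.norm_eq_abs]; exact hdb p.1 (hIsub hp.1)
    rw [integral_integral_swap hint]
    apply setIntegral_congr_fun hIm
    intro t ht
    have hin : ∀ x : ℝ, d x * (Ioc 0 x).indicator 1 t = (Ici t).indicator d x := by
      intro x
      by_cases hxt : t ≤ x
      · have hmem : t ∈ Ioc 0 x := ⟨ht.1, hxt⟩
        simp [indicator_of_mem hmem, indicator_of_mem (mem_Ici.mpr hxt)]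
      · have h1 : t ∉ Ioc 0 x := fun hc => hxt hc.2
        have h2 : x ∉ Ici t := fun hc => hxt hc
        simp [indicator_of_notMem h1, indicator_of_notMem h2]
    calc (∫ x in I, d x * (Ioc 0 x).indicator 1 t)
        = ∫ x in I, (Ici t).indicator d x := by
          exact setIntegral_congr_fun hIm fun x _ => hin x
      _ = ∫ x in I ∩ Ici t, d x := setIntegral_indicator measurableSet_Ici
      _ = ∫ x in Icc t 1, d x := by
          have hseteq : I ∩ Ici t = Icc t 1 := by
            ext y
            simp only [hI_def, mem_inter_iff, mem_Ioc, mem_Ici, mem_Icc]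
            constructor
            · rintro ⟨⟨_, hy1⟩, hty⟩; exact ⟨hty, hy1⟩
            · rintro ⟨hty, hy1⟩; exact ⟨⟨lt_of_lt_of_le ht.1 hty, hy1⟩, hty⟩
          rw [hseteq]
      _ = ∫ x in Ioc t 1, d x := integral_Icc_eq_integral_Ioc
      _ = ∫ x in t..1, d x := (intervalIntegral.integral_of_le ht.2).symm
      _ = -(D t) := by
          have := intervalIntegral.integral_add_adjacent_intervals (hdii 0 t) (hdii t 1)
          have hD1' : (∫ t in (0:ℝ)..1, d t) = 0 := hMean
          rw [hD1'] at this
          have : D t + ∫ x in t..1, d x = 0 := this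
          linarith
  have e4 : ∫ t in I, (-(D t)) ∂μh = -∫ t in I, D t ∂μh := integral_neg _
  -- main identity
  have final0 : (∫ x in (0:ℝ)..1, Ghat x ^ n) - (∫ x in (0:ℝ)..1, G x ^ n)
      = -∫ t in I, D t ∂μh := by
    rw [intervalIntegral.integral_of_le zero_le_one, intervalIntegral.integral_of_le zero_le_one]
    rw [← integral_sub hGhnInt hGnInt]
    rw [show ∫ x in Ioc (0:ℝ) 1, (Ghat x ^ n - G x ^ n) = ∫ x in I, (Ghat x ^ n - G x ^ n) by
      rw [hI_def]]
    rw [e1, e2, e3, e4]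
  have hDint_nonneg : 0 ≤ ∫ t in I, D t ∂μh :=
    setIntegral_nonneg hIm fun t ht => hMPS t (hIsub ht)
  constructor
  · linarith
  · intro hn2 hpos
    -- the set S in terms of D
    have hSrep : {x : ℝ | x ∈ Icc (0:ℝ) 1 ∧ 0 < ∫ t in (0:ℝ)..x, d t}
        = {x : ℝ | x ∈ Icc (0:ℝ) 1 ∧ 0 < D x} := rfl
    rw [hSrep] at hpos
    have hU : IsOpen {x : ℝ | 0 < D x} := isOpen_lt continuous_const hDcont
    set T : Set (ℚ × ℚ) := {p | 0 < ((p.1 : ℝ)) ∧ ((p.1 : ℝ)) < ((p.2 : ℝ)) ∧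
      Icc ((p.1 : ℝ)) ((p.2 : ℝ)) ⊆ {x : ℝ | 0 < D x}} with hT_def
    have hcover : {x : ℝ | x ∈ Icc (0:ℝ) 1 ∧ 0 < D x}
        ⊆ ⋃ p ∈ T, Ioc ((p.1 : ℝ)) (min ((p.2 : ℝ)) 1) := by
      rintro x ⟨hx01, hDx⟩
      have hx0 : 0 < x := by
        rcases lt_or_eq_of_le hx01.1 with hlt | heq
        · exact hlt
        · exfalso; rw [← heq, hD0] at hDx; exact lt_irrefl 0 hDx
      obtain ⟨ε, hε, hball⟩ := Metric.mem_nhds_iff.mp (hU.mem_nhds hDx)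
      have hl : max (x - ε / 2) 0 < x := by
        rcases max_cases (x - ε / 2) 0 with ⟨he, _⟩ | ⟨he, _⟩ <;> rw [he] <;> linarith
      obtain ⟨a, ha1, ha2⟩ := exists_rat_btwn hl
      obtain ⟨b, hb1, hb2⟩ := exists_rat_btwn (show x < x + ε / 2 by linarith)
      have hIab : Icc ((a : ℝ)) ((b : ℝ)) ⊆ {x : ℝ | 0 < D x} := by
        intro y hy
        apply hball
        rw [Metric.mem_ball, Real.dist_eq, abs_lt]
        have h1 : max (x - ε / 2) 0 ≥ x - ε / 2 := le_max_left _ _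
        constructor <;> [linarith [hy.1]; linarith [hy.2]]
      have hpT : (a, b) ∈ T :=
        ⟨lt_of_le_of_lt (le_max_right _ _) ha1, lt_trans ha2 hb1, hIab⟩
      refine mem_biUnion hpT ⟨ha2, le_min hb1.le hx01.2⟩
    have hex : ∃ p ∈ T, G.measure (Ioc ((p.1 : ℝ)) (min ((p.2 : ℝ)) 1)) ≠ 0 := by
      by_contra hc
      push_neg at hc
      have hnull : G.measure (⋃ p ∈ T, Ioc ((p.1 : ℝ)) (min ((p.2 : ℝ)) 1)) = 0 :=
        (measure_biUnion_null_iff (Set.to_countable T)).mpr hc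
      have := measure_mono hcover (μ := G.measure)
      rw [hnull] at this
      exact absurd (le_antisymm this zero_le) hpos.ne'
    obtain ⟨p, hpT, hppos⟩ := hex
    set a : ℝ := (p.1 : ℝ) with ha_def
    set b : ℝ := min ((p.2 : ℝ)) 1 with hb_def
    have ha0 : 0 < a := hpT.1
    have hb1 : b ≤ 1 := min_le_right _ _
    have hab : a < b := by
      by_contra hc
      exact hppos (by rw [Ioc_eq_empty hc]; exact measure_empty)
    have haI : a ∈ Icc (0:ℝ) 1 := ⟨ha0.le, le_trans hab.le hb1⟩
    have hbI : b ∈ Icc (0:ℝ) 1 := ⟨lt_trans ha0 hab |>.le, hb1⟩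
    have hIccU : Icc a b ⊆ {x : ℝ | 0 < D x} :=
      subset_trans (Icc_subset_Icc le_rfl (min_le_left _ _)) hpT.2.2
    -- G a < G b
    have hGab : G a < G b := by
      have := hppos
      rw [G.measure_Ioc] at this
      have h1 : 0 < G b - G a := by
        by_contra hc
        push_neg at hc
        exact this (by rw [ENNReal.ofReal_eq_zero]; linarith)
      linarith
    -- h a < h b
    have hhab : h a < h b := by
      rw [hhval a haI, hhval b hbI]
      apply Finset.sum_lt_sum
      · intro k _
        have h1 := hGhat01 a haI
        have h2 := hG01 a haI
        exact mul_le_mul (pow_le_pow_left₀ h1.1 (Ghat.mono hab.le) k)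
          (pow_le_pow_left₀ h2.1 (G.mono hab.le) _) (pow_nonneg h2.1 _)
          (pow_nonneg (hGhat01 b hbI).1 k)
      · refine ⟨0, Finset.mem_range.mpr (by omega), ?_⟩
        simp only [pow_zero, one_mul, Nat.sub_zero]
        exact pow_lt_pow_left₀ hGab (hG01 a haI).1 (by omega)
    -- μh (Ioc a b) is positive and finite
    have hμab_pos : 0 < μh (Ioc a b) := by
      rw [h.measure_Ioc]
      exact ENNReal.ofReal_pos.mpr (by linarith)
    have hμab_ne : μh (Ioc a b) ≠ ⊤ := by
      rw [h.measure_Ioc]; exact ENNReal.ofReal_ne_top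
    -- minimum of D on Icc a b
    obtain ⟨z, hzmem, hzmin⟩ :=
      isCompact_Icc.exists_isMinOn (nonempty_Icc.mpr hab.le) hDcont.continuousOn
    rw [isMinOn_iff] at hzmin
    have hzpos : 0 < D z := hIccU hzmem
    have habI : Ioc a b ⊆ I := Ioc_subset_Ioc ha0.le hb1
    have hstrict : 0 < ∫ t in I, D t ∂μh := by
      have h1 : 0 < D z * (μh (Ioc a b)).toReal :=
        mul_pos hzpos (ENNReal.toReal_pos hμab_pos.ne' hμab_ne)
      have h2 : D z * (μh (Ioc a b)).toReal ≤ ∫ t in Ioc a b, D t ∂μh :=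
        by have := setIntegral_ge_of_const_le measurableSet_Ioc hμab_ne
             (fun x hx => hzmin x (Ioc_subset_Icc_self hx)) (hDIntμ.mono_set habI)
           rwa [smul_eq_mul, mul_comm, measureReal_def] at this
      have h3 : ∫ t in Ioc a b, D t ∂μh ≤ ∫ t in I, D t ∂μh := by
        apply setIntegral_mono_set hDIntμ
        · filter_upwards [ae_restrict_mem hIm] with t ht using hMPS t (hIsub ht)
        · exact HasSubset.Subset.eventuallyLE habI
      linarith
    linarith
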